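/- In the cake instance constructed from segment sets A_1, …, A_n: there exists a connected division with utilitarian welfare at least B = (4/3)·Σ_{i=1}^n |A_i| − n if and only if one can choose n pairwise disjoint segments, exactly one from each A_i. (Correctness of the reduction from the Maximum Cover by Segments Packing problem, used to prove that maximizing utilitarian welfare with connected pieces is strongly NP-hard.) -/

import Mathlib

open MeasureTheory Set
open scoped ENNReal

/-- Density of a uniform block: total value `c` spread uniformly over the
interval `(a, b)`. -/
noncomputable def unif (a b c : ℝ) : ℝ → ℝ≥0∞ :=
  (Ioo a b).indicator fun _ => ENNReal.ofReal (c / (b - a))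

/-- The players of the instance built from an MCSP instance with segment sets
`A_1, …, A_n` (`|A_i| = L i`): `L i` segment players and `L i - 1` separation
players for each `i`. -/
abbrev MCPlayer (n : ℕ) (L : Fin n → ℕ) : Type :=
  (Σ i : Fin n, Fin (L i)) ⊕ (Σ i : Fin n, Fin (L i - 1))

/-- `Coff n L m i` = the left endpoint `C_i` of the compensation range of the
set `A_i`. -/
noncomputable def Coff (n : ℕ) (L : Fin n → ℕ) (m : ℕ) (i : Fin n) : ℝ :=
  m + 2 * ∑ i' ∈ Finset.univ.filter (· < i), ((L i' : ℝ) - 1)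

/-- The value density function of each player in the reduction (segment players
indexed from 0; index `j` here corresponds to the paper's `p_i^{j+1}`). -/
noncomputable def mcDensity (n m : ℕ) (L : Fin n → ℕ)
    (A : (i : Fin n) → Fin (L i) → ℕ × ℕ) : MCPlayer n L → ℝ → ℝ≥0∞
  | Sum.inl ⟨i, j⟩ => fun t =>
      unif (((A i j).1 : ℝ) - 1) ((A i j).2 : ℝ) (1 / 3) t +
      (if (j : ℕ) = 0 then
        unif (Coff n L m i + 1) (Coff n L m i + 2) (1 / 3) t +
          unif (Coff n L m i + 3) (Coff n L m i + 4) (1 / 3) t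
      else if (j : ℕ) = L i - 1 then
        unif (Coff n L m i + 2 * (L i : ℝ) - 5) (Coff n L m i + 2 * (L i : ℝ) - 4)
          (1 / 3) t +
        unif (Coff n L m i + 2 * (L i : ℝ) - 3) (Coff n L m i + 2 * (L i : ℝ) - 2)
          (1 / 3) t
      else
        unif (Coff n L m i + 2 * ((j : ℕ) : ℝ) - 1) (Coff n L m i + 2 * ((j : ℕ) : ℝ))
          (1 / 3) t +
        unif (Coff n L m i + 2 * ((j : ℕ) : ℝ) + 1)
          (Coff n L m i + 2 * ((j : ℕ) : ℝ) + 2) (1 / 3) t)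
  | Sum.inr ⟨i, j⟩ => fun t =>
      unif (Coff n L m i + 2 * ((j : ℕ) : ℝ)) (Coff n L m i + 2 * ((j : ℕ) : ℝ) + 1) 1 t

/-- The valuation measure of each player in the reduction. -/
noncomputable def mcMeas (n m : ℕ) (L : Fin n → ℕ)
    (A : (i : Fin n) → Fin (L i) → ℕ × ℕ) (p : MCPlayer n L) : Measure ℝ :=
  MeasureTheory.volume.withDensity (mcDensity n m L A p)

lemma unif_measurable (a b c : ℝ) : Measurable (unif a b c) :=
  Measurable.indicator measurable_const measurableSet_Ioo

lemma setLIntegral_unif (a b c : ℝ) (S : Set ℝ) :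
    ∫⁻ x in S, unif a b c x = ENNReal.ofReal (c / (b - a)) * volume (S ∩ Ioo a b) := by
  rw [unif, lintegral_indicator measurableSet_Ioo, setLIntegral_const,
    Measure.restrict_apply measurableSet_Ioo, Set.inter_comm]


def tau1 (Li : ℕ) (j : ℕ) : ℕ := if j = 0 then 0 else if j = Li - 1 then Li - 3 else j - 1
def tau2 (Li : ℕ) (j : ℕ) : ℕ := if j = 0 then 1 else if j = Li - 1 then Li - 2 else j

def segI (n : ℕ) (L : Fin n → ℕ) (A : (i : Fin n) → Fin (L i) → ℕ × ℕ)
    (i : Fin n) (j : Fin (L i)) : Set ℝ := Ioo (((A i j).1 : ℝ) - 1) ((A i j).2 : ℝ)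

noncomputable def oddI (n m : ℕ) (L : Fin n → ℕ) (i : Fin n) (t : ℕ) : Set ℝ :=
  Ioo (Coff n L m i + 2 * t + 1) (Coff n L m i + 2 * t + 2)

noncomputable def evenI (n m : ℕ) (L : Fin n → ℕ) (i : Fin n) (t : ℕ) : Set ℝ :=
  Ioo (Coff n L m i + 2 * t) (Coff n L m i + 2 * t + 1)

variable (n m : ℕ) (L : Fin n → ℕ) (A : (i : Fin n) → Fin (L i) → ℕ × ℕ)

lemma mcMeas_seg_apply (hL3 : ∀ i, 3 ≤ L i) (i : Fin n) (j : Fin (L i)) {S : Set ℝ}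
    (hS : MeasurableSet S) :
    mcMeas n m L A (Sum.inl ⟨i, j⟩) S =
      ENNReal.ofReal ((1/3) / (((A i j).2 : ℝ) - (A i j).1 + 1)) * volume (S ∩ segI n L A i j)
      + (ENNReal.ofReal (1/3) * volume (S ∩ oddI n m L i (tau1 (L i) j))
      + ENNReal.ofReal (1/3) * volume (S ∩ oddI n m L i (tau2 (L i) j))) := by
  have hLi := hL3 i
  rw [mcMeas, withDensity_apply _ hS]
  show ∫⁻ t in S, (unif _ _ _ t + _) = _
  rw [lintegral_add_left (unif_measurable _ _ _), setLIntegral_unif]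
  congr 1
  · rw [segI]; norm_num; ring_nf
  by_cases h0 : (j : ℕ) = 0
  · simp only [if_pos h0]
    rw [lintegral_add_left (unif_measurable _ _ _), setLIntegral_unif, setLIntegral_unif,
      tau1, tau2, if_pos h0, if_pos h0, oddI, oddI]
    norm_num; ring_nf
  by_cases hl : (j : ℕ) = L i - 1
  · simp only [if_neg h0, if_pos hl]
    rw [lintegral_add_left (unif_measurable _ _ _), setLIntegral_unif, setLIntegral_unif,
      tau1, tau2, if_neg h0, if_neg h0, if_pos hl, if_pos hl, oddI, oddI]
    have h3 : ((L i - 3 : ℕ) : ℝ) = (L i : ℝ) - 3 := by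
      push_cast [Nat.cast_sub hLi]; ring
    have h2 : ((L i - 2 : ℕ) : ℝ) = (L i : ℝ) - 2 := by
      push_cast [Nat.cast_sub (by omega : 2 ≤ L i)]; ring
    rw [h3, h2]; ring_nf
  · simp only [if_neg h0, if_neg hl]
    rw [lintegral_add_left (unif_measurable _ _ _), setLIntegral_unif, setLIntegral_unif,
      tau1, tau2, if_neg h0, if_neg h0, if_neg hl, if_neg hl, oddI, oddI]
    have h1 : (((j : ℕ) - 1 : ℕ) : ℝ) = ((j:ℕ) : ℝ) - 1 := by
      push_cast [Nat.cast_sub (by omega : 1 ≤ (j:ℕ))]; ring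
    rw [h1]; ring_nf

lemma mcMeas_sep_apply (i : Fin n) (t : Fin (L i - 1)) {S : Set ℝ} (hS : MeasurableSet S) :
    mcMeas n m L A (Sum.inr ⟨i, t⟩) S = volume (S ∩ evenI n m L i t) := by
  rw [mcMeas, withDensity_apply _ hS]
  show ∫⁻ x in S, unif _ _ _ x = _
  rw [setLIntegral_unif, evenI]
  norm_num

noncomputable def V (S : Set ℝ) : ℝ := (volume S).toReal

lemma V_nonneg (S : Set ℝ) : 0 ≤ V S := ENNReal.toReal_nonneg

lemma vol_inter_Ioo_ne_top (S : Set ℝ) (a b : ℝ) : volume (S ∩ Ioo a b) ≠ ⊤ := by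
  refine ne_top_of_le_ne_top ?_ (measure_mono Set.inter_subset_right)
  rw [Real.volume_Ioo]; exact ENNReal.ofReal_ne_top

lemma V_Ioo (a b : ℝ) (h : a ≤ b) : V (Ioo a b) = b - a := by
  rw [V, Real.volume_Ioo, ENNReal.toReal_ofReal (by linarith)]

lemma V_inter_Ioo_le (S : Set ℝ) (a b : ℝ) (h : a ≤ b) : V (S ∩ Ioo a b) ≤ b - a := by
  rw [← V_Ioo a b h]
  exact ENNReal.toReal_mono (by rw [Real.volume_Ioo]; exact ENNReal.ofReal_ne_top)
    (measure_mono Set.inter_subset_right)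

lemma V_inter_of_subset (S B : Set ℝ) (h : B ⊆ S) : V (S ∩ B) = V B := by
  rw [Set.inter_eq_self_of_subset_right h]

lemma nonempty_of_V_pos {S : Set ℝ} (h : 0 < V S) : S.Nonempty := by
  rcases Set.eq_empty_or_nonempty S with rfl | h'
  · simp [V] at h
  · exact h'

lemma ofReal_mul_vol {a : ℝ} (ha : 0 ≤ a) {s : Set ℝ} (hs : volume s ≠ ⊤) :
    ENNReal.ofReal a * volume s = ENNReal.ofReal (a * (volume s).toReal) := by
  rw [ENNReal.ofReal_mul ha, ENNReal.ofReal_toReal hs]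

lemma Ioo_disjoint {a b a' b' : ℝ} (h : b ≤ a') : Disjoint (Ioo a b) (Ioo a' b') := by
  rw [Set.disjoint_left]
  rintro x ⟨_, h1⟩ ⟨h2, _⟩
  linarith

open Finset in
lemma comb (L : ℕ) (hL : 3 ≤ L) (a w1 w2 : Fin L → ℝ) (y : Fin (L-1) → ℝ)
    (ha0 : ∀ j, 0 ≤ a j) (ha : ∀ j, a j ≤ 1/3)
    (hw10 : ∀ j, 0 ≤ w1 j) (hw20 : ∀ j, 0 ≤ w2 j)
    (hw1 : ∀ j, w1 j ≤ 1) (hw2 : ∀ j, w2 j ≤ 1)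
    (hy0 : ∀ t, 0 ≤ y t) (hy1 : ∀ t, y t ≤ 1)
    (ε : Fin L → Fin (L-1))
    (hε0 : ∀ j, 0 < w1 j → 0 < w2 j → (ε j : ℕ) ≠ 0)
    (htb : ∀ j, 0 < w1 j → 0 < w2 j → y (ε j) = 0)
    (hεinj : ∀ j j', 0 < w1 j → 0 < w2 j → 0 < w1 j' → 0 < w2 j' → ε j = ε j' → j = j')
    (hsp : ∀ j, 0 < a j → 0 < w1 j + w2 j → y ⟨0, by omega⟩ = 0)
    (hspu : ∀ j j', 0 < a j → 0 < w1 j + w2 j → 0 < a j' → 0 < w1 j' + w2 j' → j = j')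
    (hsum : ∑ j, (w1 j + w2 j) ≤ (L:ℝ) - 1) :
    (∑ j, a j + (1/3) * ∑ j, (w1 j + w2 j) + ∑ t, y t ≤ (4/3) * L - 1) ∧
    ((∀ j, a j ≠ 1/3) → ∑ j, a j + (1/3) * ∑ j, (w1 j + w2 j) + ∑ t, y t < (4/3) * L - 1) := by
  have hy_sum : ∑ t, y t ≤ (L:ℝ) - 1 := by
    calc ∑ t, y t ≤ ∑ t : Fin (L-1), (1:ℝ) := Finset.sum_le_sum fun t _ => hy1 t
    _ = (L:ℝ) - 1 := by
      rw [Finset.sum_const, Finset.card_univ, Fintype.card_fin, nsmul_eq_mul, mul_one]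
      push_cast [Nat.cast_sub (by omega : 1 ≤ L)]; ring
  set K : Finset (Fin L) := Finset.univ.filter (fun j => 0 < a j) with hK
  by_cases hKe : K = ∅
  · -- no player touches its segment: easy strict bound
    have hA : ∑ j, a j = 0 := by
      apply Finset.sum_eq_zero
      intro j _
      by_contra h
      have : j ∈ K := by simp [hK, lt_of_le_of_ne (ha0 j) (Ne.symm h)]
      simp [hKe] at this
    have : ∑ j, a j + (1/3) * ∑ j, (w1 j + w2 j) + ∑ t, y t < (4/3) * L - 1 := by
      rw [hA]
      have hL3 : (3:ℝ) ≤ (L:ℝ) := by exact_mod_cast hL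
      linarith
    exact ⟨le_of_lt this, fun _ => this⟩
  -- main case
  set Sp : Finset (Fin L) := K.filter (fun j => 0 < w1 j + w2 j) with hSp
  set T : Finset (Fin L) := (Finset.univ \ K).filter (fun j => 0 < w1 j ∧ 0 < w2 j) with hT
  have hSpK : Sp ⊆ K := Finset.filter_subset _ _
  have hSp1 : Sp.card ≤ 1 := by
    rw [Finset.card_le_one]
    intro j hj j' hj'
    rw [hSp, Finset.mem_filter, hK, Finset.mem_filter] at hj hj'
    exact hspu j j' hj.1.2 hj.2 hj'.1.2 hj'.2
  -- sum of a
  have hKuniv : ∀ j ∉ K, a j = 0 := by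
    intro j hj
    rw [hK, Finset.mem_filter] at hj
    push_neg at hj
    have := hj (Finset.mem_univ j)
    linarith [ha0 j]
  have hA_split : ∑ j, a j = ∑ j ∈ K, a j :=
    (Finset.sum_subset (Finset.subset_univ K) (fun j _ hj => hKuniv j hj)).symm
  have hAle : ∑ j ∈ K, a j ≤ (K.card : ℝ) * (1/3) :=
    Finset.sum_le_card_nsmul K a (1/3) (fun j _ => ha j) |>.trans_eq (by rw [nsmul_eq_mul])
  -- sum of w over K
  have hWK : ∑ j ∈ K, (w1 j + w2 j) ≤ 2 * (Sp.card : ℝ) := by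
    rw [← Finset.sum_sdiff hSpK]
    have h1 : ∑ j ∈ K \ Sp, (w1 j + w2 j) = 0 := by
      apply Finset.sum_eq_zero
      intro j hj
      rw [Finset.mem_sdiff] at hj
      have hj2 := hj.2
      rw [hSp, Finset.mem_filter] at hj2
      push_neg at hj2
      have h2 := hj2 hj.1
      linarith [hw10 j, hw20 j]
    have h2 : ∑ j ∈ Sp, (w1 j + w2 j) ≤ (Sp.card : ℝ) * 2 :=
      Finset.sum_le_card_nsmul Sp _ 2 (fun j _ => by linarith [hw1 j, hw2 j]) |>.trans_eq
        (by rw [nsmul_eq_mul])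
    linarith
  -- sum of w over complement of K
  have hWF : ∑ j ∈ Finset.univ \ K, (w1 j + w2 j) ≤ ((Finset.univ \ K).card : ℝ) + T.card := by
    have hTsub : T ⊆ Finset.univ \ K := Finset.filter_subset _ _
    rw [← Finset.sum_sdiff hTsub]
    have h1 : ∑ j ∈ (Finset.univ \ K) \ T, (w1 j + w2 j) ≤ (((Finset.univ \ K) \ T).card : ℝ) * 1 := by
      apply (Finset.sum_le_card_nsmul _ _ 1 _).trans_eq (by rw [nsmul_eq_mul])
      intro j hj
      rw [Finset.mem_sdiff] at hj
      have hj2 := hj.2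
      by_cases hq : 0 < w1 j
      · by_cases hr : 0 < w2 j
        · exact absurd (by rw [hT, Finset.mem_filter]; exact ⟨hj.1, hq, hr⟩) hj2
        · have : w2 j = 0 := le_antisymm (not_lt.1 hr) (hw20 j)
          linarith [hw1 j]
      · have : w1 j = 0 := le_antisymm (not_lt.1 hq) (hw10 j)
        linarith [hw2 j]
    have h2 : ∑ j ∈ T, (w1 j + w2 j) ≤ (T.card : ℝ) * 2 :=
      Finset.sum_le_card_nsmul T _ 2 (fun j _ => by linarith [hw1 j, hw2 j]) |>.trans_eq
        (by rw [nsmul_eq_mul])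
    have hcard : (((Finset.univ \ K) \ T).card : ℝ) = ((Finset.univ \ K).card : ℝ) - T.card := by
      rw [Finset.card_sdiff_of_subset hTsub]
      push_cast [Nat.cast_sub (Finset.card_le_card hTsub)]
      ring
    linarith
  -- sum of y
  have hzero : (0:ℕ) < L - 1 := by omega
  set S0 : Finset (Fin (L-1)) := if Sp.Nonempty then {(⟨0, hzero⟩ : Fin (L-1))} else ∅ with hS0
  set E : Finset (Fin (L-1)) := T.image ε ∪ S0 with hE
  have hTmem : ∀ j ∈ T, 0 < w1 j ∧ 0 < w2 j := by
    intro j hj; rw [hT, Finset.mem_filter] at hj; exact hj.2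
  have hEcard : (E.card : ℝ) = T.card + Sp.card := by
    have hdisj : Disjoint (T.image ε) S0 := by
      rw [Finset.disjoint_left]
      intro t ht ht0
      rw [Finset.mem_image] at ht
      obtain ⟨j, hj, rfl⟩ := ht
      rw [hS0] at ht0
      split at ht0
      · rw [Finset.mem_singleton] at ht0
        exact hε0 j (hTmem j hj).1 (hTmem j hj).2 (by rw [ht0])
      · simp at ht0
    rw [hE, Finset.card_union_of_disjoint hdisj,
      Finset.card_image_of_injOn (fun j hj j' hj' h =>
        hεinj j j' (hTmem j hj).1 (hTmem j hj).2 (hTmem j' hj').1 (hTmem j' hj').2 h)]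
    have hs0 : (S0.card : ℝ) = Sp.card := by
      rw [hS0]
      rcases Finset.eq_empty_or_nonempty Sp with h | h
      · simp [h]
      · rw [if_pos h, Finset.card_singleton]
        have h1 := Finset.card_pos.mpr h
        have : Sp.card = 1 := by omega
        rw [this]
    push_cast
    rw [hs0]
  have hyE : ∑ t, y t ≤ ((L:ℝ) - 1) - E.card := by
    have hsplit := Finset.sum_sdiff (Finset.subset_univ E) (f := y)
    have hEzero : ∑ t ∈ E, y t = 0 := by
      apply Finset.sum_eq_zero
      intro t ht
      rw [hE, Finset.mem_union] at ht
      rcases ht with ht | ht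
      · rw [Finset.mem_image] at ht
        obtain ⟨j, hj, rfl⟩ := ht
        exact htb j (hTmem j hj).1 (hTmem j hj).2
      · rw [hS0] at ht
        split at ht
        · rw [Finset.mem_singleton] at ht
          subst ht
          next h =>
            obtain ⟨j, hj⟩ := h
            rw [hSp, Finset.mem_filter, hK, Finset.mem_filter] at hj
            exact hsp j hj.1.2 hj.2
        · simp at ht
    have hrest : ∑ t ∈ Finset.univ \ E, y t ≤ ((Finset.univ \ E).card : ℝ) * 1 :=
      Finset.sum_le_card_nsmul _ _ 1 (fun t _ => hy1 t) |>.trans_eq (by rw [nsmul_eq_mul])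
    have hcard : ((Finset.univ \ E).card : ℝ) = ((L:ℝ) - 1) - E.card := by
      have huniv : (Finset.univ : Finset (Fin (L-1))).card = L - 1 := by simp
      have hEle : E.card ≤ L - 1 := by
        have h := Finset.card_le_card (Finset.subset_univ E); rw [huniv] at h; exact h
      rw [Finset.card_sdiff_of_subset (Finset.subset_univ E), huniv, Nat.cast_sub hEle,
        Nat.cast_sub (by omega : 1 ≤ L), Nat.cast_one]
    rw [← hsplit, hEzero]
    simp only [add_zero]
    linarith
  -- cardinal bookkeeping
  have hKcard : (K.card : ℝ) ≤ L := by
    have := Finset.card_le_card (Finset.subset_univ K)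
    rw [Finset.card_univ, Fintype.card_fin] at this
    exact_mod_cast this
  have hFcard : ((Finset.univ \ K).card : ℝ) = (L:ℝ) - K.card := by
    rw [Finset.card_sdiff_of_subset (Finset.subset_univ K)]
    push_cast [Nat.cast_sub (Finset.card_le_card (Finset.subset_univ K))]
    simp
  have hW_split : ∑ j, (w1 j + w2 j)
      = ∑ j ∈ Finset.univ \ K, (w1 j + w2 j) + ∑ j ∈ K, (w1 j + w2 j) :=
    (Finset.sum_sdiff (Finset.subset_univ K)).symm
  have hW_total : ∑ j, (w1 j + w2 j) ≤ ((L:ℝ) - K.card) + T.card + 2 * Sp.card := by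
    rw [hW_split]; rw [hFcard] at hWF; linarith
  have hW_nonneg : 0 ≤ ∑ j, (w1 j + w2 j) :=
    Finset.sum_nonneg (fun j _ => by linarith [hw10 j, hw20 j])
  have hEreal : ∑ t, y t ≤ ((L:ℝ) - 1) - T.card - Sp.card := by rw [hEcard] at hyE; linarith
  constructor
  · rw [hA_split]
    have hT0 : (0:ℝ) ≤ T.card := Nat.cast_nonneg _
    have hS0' : (0:ℝ) ≤ Sp.card := Nat.cast_nonneg _
    linarith
  · intro hne
    have hAlt : ∑ j ∈ K, a j < (K.card : ℝ) * (1/3) := by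
      have hKne : K.Nonempty := Finset.nonempty_of_ne_empty hKe
      calc ∑ j ∈ K, a j < ∑ j ∈ K, (1/3 : ℝ) :=
            Finset.sum_lt_sum_of_nonempty hKne (fun j _ => lt_of_le_of_ne (ha j) (hne j))
      _ = (K.card : ℝ) * (1/3) := by rw [Finset.sum_const, nsmul_eq_mul]
    rw [hA_split]
    have hT0 : (0:ℝ) ≤ T.card := Nat.cast_nonneg _
    have hS0' : (0:ℝ) ≤ Sp.card := Nat.cast_nonneg _
    linarith

section Forward

variable (n m : ℕ) (L : Fin n → ℕ) (A : (i : Fin n) → Fin (L i) → ℕ × ℕ)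

noncomputable def Jp (c : Fin (Fintype.card (MCPlayer n L) + 1) → ℝ)
    (σ : Fin (Fintype.card (MCPlayer n L)) ≃ MCPlayer n L) (p : MCPlayer n L) : Set ℝ :=
  Ioo (c (σ.symm p).castSucc) (c (σ.symm p).succ)

variable (c : Fin (Fintype.card (MCPlayer n L) + 1) → ℝ)
  (σ : Fin (Fintype.card (MCPlayer n L)) ≃ MCPlayer n L)

noncomputable def aa (i : Fin n) (j : Fin (L i)) : ℝ :=
  (1/3) / (((A i j).2 : ℝ) - (A i j).1 + 1) * V (Jp n L c σ (Sum.inl ⟨i,j⟩) ∩ segI n L A i j)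

noncomputable def w1F (i : Fin n) (j : Fin (L i)) : ℝ :=
  V (Jp n L c σ (Sum.inl ⟨i,j⟩) ∩ oddI n m L i (tau1 (L i) j))

noncomputable def w2F (i : Fin n) (j : Fin (L i)) : ℝ :=
  V (Jp n L c σ (Sum.inl ⟨i,j⟩) ∩ oddI n m L i (tau2 (L i) j))

noncomputable def yF (i : Fin n) (t : Fin (L i - 1)) : ℝ :=
  V (Jp n L c σ (Sum.inr ⟨i,t⟩) ∩ evenI n m L i t)

lemma Jp_disjoint (hmono : Monotone c) {p p' : MCPlayer n L} (h : p ≠ p') :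
    Disjoint (Jp n L c σ p) (Jp n L c σ p') := by
  have hk : σ.symm p ≠ σ.symm p' := fun he => h (by
    have := congrArg σ he; simpa using this)
  rcases lt_or_gt_of_ne hk with hlt | hlt
  · have hv : ((σ.symm p) : ℕ) < ((σ.symm p') : ℕ) := hlt
    exact Ioo_disjoint (hmono (by rw [Fin.le_def, Fin.val_succ, Fin.coe_castSucc]; omega))
  · have hv : ((σ.symm p') : ℕ) < ((σ.symm p) : ℕ) := hlt
    exact (Ioo_disjoint (hmono (by rw [Fin.le_def, Fin.val_succ, Fin.coe_castSucc]; omega))).symm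

lemma E_eq_seg (hL3 : ∀ i, 3 ≤ L i) (hseg1 : ∀ i j, 1 ≤ (A i j).1 ∧ (A i j).1 ≤ (A i j).2)
    (i : Fin n) (j : Fin (L i)) :
    mcMeas n m L A (Sum.inl ⟨i,j⟩) (Jp n L c σ (Sum.inl ⟨i,j⟩)) =
      ENNReal.ofReal (aa n L A c σ i j +
        (1/3 * w1F n m L c σ i j + 1/3 * w2F n m L c σ i j)) := by
  have hb := (hseg1 i j).1
  have hbe := (hseg1 i j).2
  have hlen : (0:ℝ) < ((A i j).2 : ℝ) - (A i j).1 + 1 := by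
    have : ((A i j).1 : ℝ) ≤ (A i j).2 := by exact_mod_cast hbe
    linarith
  rw [Jp, mcMeas_seg_apply n m L A hL3 i j measurableSet_Ioo]
  rw [segI, oddI, oddI, ofReal_mul_vol (by positivity) (vol_inter_Ioo_ne_top _ _ _),
    ofReal_mul_vol (by norm_num) (vol_inter_Ioo_ne_top _ _ _),
    ofReal_mul_vol (by norm_num) (vol_inter_Ioo_ne_top _ _ _),
    ← ENNReal.ofReal_add (by positivity) (by positivity),
    ← ENNReal.ofReal_add (by positivity) (by positivity)]
  simp only [aa, w1F, w2F, Jp, segI, oddI, V]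

lemma E_eq_sep (i : Fin n) (t : Fin (L i - 1)) :
    mcMeas n m L A (Sum.inr ⟨i,t⟩) (Jp n L c σ (Sum.inr ⟨i,t⟩)) =
      ENNReal.ofReal (yF n m L c σ i t) := by
  rw [Jp, mcMeas_sep_apply n m L A i t measurableSet_Ioo, yF, V]
  simp only [Jp, evenI]
  rw [ENNReal.ofReal_toReal (vol_inter_Ioo_ne_top _ _ _)]

end Forward

section Forward2

variable (n m : ℕ) (L : Fin n → ℕ) (A : (i : Fin n) → Fin (L i) → ℕ × ℕ)
  (c : Fin (Fintype.card (MCPlayer n L) + 1) → ℝ)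
  (σ : Fin (Fintype.card (MCPlayer n L)) ≃ MCPlayer n L)

lemma tau_facts (Li j : ℕ) (h3 : 3 ≤ Li) (hj : j < Li) :
    tau1 Li j < Li - 1 ∧ tau2 Li j < Li - 1 ∧ tau1 Li j < tau2 Li j ∧ tau2 Li j ≠ 0 := by
  rw [tau1, tau2]; split_ifs <;> omega

lemma Coff_ge (hL3 : ∀ i, 3 ≤ L i) (i : Fin n) : (m : ℝ) ≤ Coff n L m i := by
  rw [Coff]
  have : (0:ℝ) ≤ ∑ i' ∈ Finset.univ.filter (· < i), ((L i' : ℝ) - 1) := by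
    apply Finset.sum_nonneg
    intro i' _
    have := hL3 i'
    have : (3:ℝ) ≤ (L i' : ℝ) := by exact_mod_cast this
    linarith
  linarith

lemma engulf_two (i : Fin n) (j : Fin (L i))
    (h1 : 0 < w1F n m L c σ i j) (h2 : 0 < w2F n m L c σ i j)
    (hτ : tau1 (L i) j < tau2 (L i) j) :
    evenI n m L i (tau2 (L i) j) ⊆ Jp n L c σ (Sum.inl ⟨i,j⟩) := by
  rw [w1F] at h1; rw [w2F] at h2
  obtain ⟨x1, hx1J, hx1o⟩ := nonempty_of_V_pos h1
  obtain ⟨x2, hx2J, hx2o⟩ := nonempty_of_V_pos h2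
  rw [oddI, mem_Ioo] at hx1o hx2o
  rw [Jp, mem_Ioo] at hx1J hx2J
  intro z hz
  rw [evenI, mem_Ioo] at hz
  rw [Jp, mem_Ioo]
  have hcast : (tau1 (L i) j : ℝ) + 1 ≤ (tau2 (L i) j : ℝ) := by exact_mod_cast hτ
  constructor <;> linarith [hx1J.1, hx1J.2, hx2J.1, hx2J.2]

lemma engulf_span (hL3 : ∀ i, 3 ≤ L i)
    (hsegm : ∀ i j, ((A i j).2 : ℝ) ≤ m) (i : Fin n) (j : Fin (L i))
    (ha : 0 < aa n L A c σ i j) (hw : 0 < w1F n m L c σ i j + w2F n m L c σ i j) :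
    evenI n m L i 0 ⊆ Jp n L c σ (Sum.inl ⟨i,j⟩) := by
  have hV : 0 < V (Jp n L c σ (Sum.inl ⟨i,j⟩) ∩ segI n L A i j) := by
    rcases lt_or_eq_of_le (V_nonneg (Jp n L c σ (Sum.inl ⟨i,j⟩) ∩ segI n L A i j)) with h | h
    · exact h
    · exfalso; rw [aa, ← h, mul_zero] at ha; exact lt_irrefl _ ha
  obtain ⟨x0, hx0J, hx0s⟩ := nonempty_of_V_pos hV
  rw [segI, mem_Ioo] at hx0s
  rw [Jp, mem_Ioo] at hx0J
  have hCm := Coff_ge n m L hL3 i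
  have hx0m : x0 < Coff n L m i := lt_of_lt_of_le (lt_of_lt_of_le hx0s.2 (hsegm i j)) hCm
  have key : ∃ x2 ∈ Jp n L c σ (Sum.inl ⟨i,j⟩), Coff n L m i + 1 ≤ x2 := by
    have h1 : 0 < w1F n m L c σ i j ∨ 0 < w2F n m L c σ i j := by
      by_contra hcon
      push_neg at hcon
      have e1 : w1F n m L c σ i j = 0 := le_antisymm hcon.1 (V_nonneg _)
      have e2 : w2F n m L c σ i j = 0 := le_antisymm hcon.2 (V_nonneg _)
      rw [e1, e2] at hw; linarith
    rcases h1 with h | h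
    · rw [w1F] at h
      obtain ⟨x2, hx2J, hx2o⟩ := nonempty_of_V_pos h
      rw [oddI, mem_Ioo] at hx2o
      refine ⟨x2, hx2J, ?_⟩
      have : (0:ℝ) ≤ (tau1 (L i) j : ℝ) := Nat.cast_nonneg _
      linarith
    · rw [w2F] at h
      obtain ⟨x2, hx2J, hx2o⟩ := nonempty_of_V_pos h
      rw [oddI, mem_Ioo] at hx2o
      refine ⟨x2, hx2J, ?_⟩
      have : (0:ℝ) ≤ (tau2 (L i) j : ℝ) := Nat.cast_nonneg _
      linarith
  obtain ⟨x2, hx2J, hx2c⟩ := key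
  rw [Jp, mem_Ioo] at hx2J
  intro z hz
  rw [evenI, mem_Ioo] at hz
  rw [Jp, mem_Ioo]
  push_cast at hz
  constructor <;> linarith [hx0J.1, hx2J.2]

lemma yF_eq_zero (hmono : Monotone c) (i : Fin n) (t : Fin (L i - 1)) (j : Fin (L i))
    (h : evenI n m L i t ⊆ Jp n L c σ (Sum.inl ⟨i,j⟩)) :
    yF n m L c σ i t = 0 := by
  have hd : Disjoint (Jp n L c σ (Sum.inr ⟨i,t⟩)) (Jp n L c σ (Sum.inl ⟨i,j⟩)) :=
    Jp_disjoint n L c σ hmono (by simp)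
  have hsub : Jp n L c σ (Sum.inr ⟨i,t⟩) ∩ evenI n m L i t ⊆ ∅ := by
    intro x hx
    exact (Set.disjoint_left.mp hd hx.1) (h hx.2)
  have : Jp n L c σ (Sum.inr ⟨i,t⟩) ∩ evenI n m L i t = ∅ := Set.eq_empty_iff_forall_notMem.mpr
    (fun x hx => hsub hx)
  rw [yF, this, V]
  simp

lemma evenI_nonempty (i : Fin n) (t : ℕ) : (evenI n m L i t).Nonempty := by
  rw [evenI]; exact Set.nonempty_Ioo.mpr (by linarith)

end Forward2

section Forward3

variable (n m : ℕ) (L : Fin n → ℕ) (A : (i : Fin n) → Fin (L i) → ℕ × ℕ)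
  (c : Fin (Fintype.card (MCPlayer n L) + 1) → ℝ)
  (σ : Fin (Fintype.card (MCPlayer n L)) ≃ MCPlayer n L)

lemma oddI_disjoint (i : Fin n) {t t' : ℕ} (h : t ≠ t') :
    Disjoint (oddI n m L i t) (oddI n m L i t') := by
  rw [oddI, oddI]
  rcases Nat.lt_or_ge t t' with hlt | hge
  · have hc : (t:ℝ) + 1 ≤ (t':ℝ) := by exact_mod_cast hlt
    exact Ioo_disjoint (by linarith)
  · have hlt : t' < t := by omega
    have hc : (t':ℝ) + 1 ≤ (t:ℝ) := by exact_mod_cast hlt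
    exact (Ioo_disjoint (by linarith)).symm

lemma oddI_vol (i : Fin n) (t : ℕ) : volume (oddI n m L i t) = ENNReal.ofReal 1 := by
  rw [oddI, Real.volume_Ioo]
  ring_nf

lemma sum_w_le (hmono : Monotone c) (hL3 : ∀ i, 3 ≤ L i) (i : Fin n) :
    ∑ j, (w1F n m L c σ i j + w2F n m L c σ i j) ≤ (L i : ℝ) - 1 := by
  have hL1 : (1:ℝ) ≤ (L i : ℝ) := by
    have := hL3 i; have : (3:ℝ) ≤ (L i : ℝ) := by exact_mod_cast this
    linarith
  set Od : Set ℝ := ⋃ t ∈ (Finset.univ : Finset (Fin (L i - 1))), oddI n m L i t with hOd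
  have hOdm : ∀ t : Fin (L i - 1), oddI n m L i (t : ℕ) ⊆ Od := by
    intro t
    rw [hOd]
    intro x hx
    exact Set.mem_biUnion (Finset.mem_univ t) hx
  have hOd_vol : volume Od = ENNReal.ofReal ((L i : ℝ) - 1) := by
    rw [hOd, measure_biUnion_finset ?hd ?hm]
    case hd =>
      intro t _ t' _ hne
      exact oddI_disjoint n m L i (fun h => hne (Fin.ext h))
    case hm => intro t _; rw [oddI]; exact measurableSet_Ioo
    have hcongr : ∑ p : Fin (L i - 1), volume (oddI n m L i (p:ℕ))
        = ∑ _p : Fin (L i - 1), ENNReal.ofReal 1 :=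
      Finset.sum_congr rfl (fun t _ => oddI_vol n m L i t)
    rw [hcongr, ← ENNReal.ofReal_sum_of_nonneg (fun _ _ => by norm_num)]
    congr 1
    rw [Finset.sum_const, Finset.card_univ, Fintype.card_fin, nsmul_eq_mul, mul_one]
    have h1 : 1 ≤ L i := by have := hL3 i; omega
    push_cast [Nat.cast_sub h1]
    ring
  have hOd_fin : volume Od ≠ ⊤ := by rw [hOd_vol]; exact ENNReal.ofReal_ne_top
  have hJOd_fin : ∀ j : Fin (L i), volume (Jp n L c σ (Sum.inl ⟨i,j⟩) ∩ Od) ≠ ⊤ :=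
    fun j => ne_top_of_le_ne_top hOd_fin (measure_mono Set.inter_subset_right)
  have hplayer : ∀ j : Fin (L i),
      w1F n m L c σ i j + w2F n m L c σ i j ≤ V (Jp n L c σ (Sum.inl ⟨i,j⟩) ∩ Od) := by
    intro j
    have hfacts := tau_facts (L i) j (hL3 i) j.isLt
    have hdis : Disjoint (Jp n L c σ (Sum.inl ⟨i,j⟩) ∩ oddI n m L i (tau1 (L i) j))
        (Jp n L c σ (Sum.inl ⟨i,j⟩) ∩ oddI n m L i (tau2 (L i) j)) :=
      ((oddI_disjoint n m L i (Nat.ne_of_lt hfacts.2.2.1)).mono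
        Set.inter_subset_right Set.inter_subset_right)
    have hmeas : MeasurableSet (Jp n L c σ (Sum.inl ⟨i,j⟩) ∩ oddI n m L i (tau2 (L i) j)) := by
      rw [Jp, oddI]; exact (measurableSet_Ioo).inter measurableSet_Ioo
    have hunion := measure_union (μ := volume) hdis hmeas
    have hsub : (Jp n L c σ (Sum.inl ⟨i,j⟩) ∩ oddI n m L i (tau1 (L i) j)) ∪
        (Jp n L c σ (Sum.inl ⟨i,j⟩) ∩ oddI n m L i (tau2 (L i) j)) ⊆
        Jp n L c σ (Sum.inl ⟨i,j⟩) ∩ Od := by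
      apply Set.union_subset
      · refine Set.inter_subset_inter_right _ ?_
        have := hOdm ⟨tau1 (L i) j, hfacts.1⟩
        exact this
      · refine Set.inter_subset_inter_right _ ?_
        exact hOdm ⟨tau2 (L i) j, hfacts.2.1⟩
    have hle := measure_mono (μ := (volume : Measure ℝ)) hsub
    rw [hunion] at hle
    have fino : ∀ (X : Set ℝ) (t : ℕ), volume (X ∩ oddI n m L i t) ≠ ⊤ := fun X t =>
      ne_top_of_le_ne_top (by rw [oddI_vol]; exact ENNReal.ofReal_ne_top)
        (measure_mono Set.inter_subset_right)
    have htr := ENNReal.toReal_mono (hJOd_fin j) hle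
    rw [ENNReal.toReal_add (fino _ _) (fino _ _)] at htr
    rw [w1F, w2F]
    exact htr
  have hsum2 : ∑ j : Fin (L i), volume (Jp n L c σ (Sum.inl ⟨i,j⟩) ∩ Od) ≤ volume Od := by
    rw [← measure_biUnion_finset ?hd2 ?hm2]
    · exact measure_mono (Set.iUnion_subset fun j => Set.iUnion_subset fun _ =>
        Set.inter_subset_right)
    case hd2 =>
      intro j _ j' _ hne
      have : (Sum.inl ⟨i,j⟩ : MCPlayer n L) ≠ Sum.inl ⟨i,j'⟩ := by
        intro hcon
        apply hne
        have := Sum.inl.inj hcon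
        exact eq_of_heq (Sigma.mk.inj_iff.mp this).2
      exact (Jp_disjoint n L c σ hmono this).mono Set.inter_subset_left Set.inter_subset_left
    case hm2 =>
      intro j _
      rw [Jp]
      exact (measurableSet_Ioo).inter (by
        rw [hOd]
        exact (Finset.univ : Finset (Fin (L i -1))).measurableSet_biUnion
          (fun t _ => by rw [oddI]; exact measurableSet_Ioo))
  calc ∑ j, (w1F n m L c σ i j + w2F n m L c σ i j)
      ≤ ∑ j, V (Jp n L c σ (Sum.inl ⟨i,j⟩) ∩ Od) := Finset.sum_le_sum (fun j _ => hplayer j)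
    _ = (∑ j : Fin (L i), volume (Jp n L c σ (Sum.inl ⟨i,j⟩) ∩ Od)).toReal :=
        (ENNReal.toReal_sum (fun j _ => hJOd_fin j)).symm
    _ ≤ (volume Od).toReal := ENNReal.toReal_mono hOd_fin hsum2
    _ = (L i : ℝ) - 1 := by rw [hOd_vol, ENNReal.toReal_ofReal (by linarith)]

end Forward3

section Forward4

variable (n m : ℕ) (L : Fin n → ℕ) (A : (i : Fin n) → Fin (L i) → ℕ × ℕ)
  (c : Fin (Fintype.card (MCPlayer n L) + 1) → ℝ)
  (σ : Fin (Fintype.card (MCPlayer n L)) ≃ MCPlayer n L)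

lemma set_bound (hmono : Monotone c) (hL3 : ∀ i, 3 ≤ L i)
    (hseg : ∀ i j, 1 ≤ (A i j).1 ∧ (A i j).1 ≤ (A i j).2 ∧ (A i j).2 ≤ m) (i : Fin n) :
    (∑ j, aa n L A c σ i j + (1/3) * ∑ j, (w1F n m L c σ i j + w2F n m L c σ i j)
        + ∑ t, yF n m L c σ i t ≤ (4/3) * (L i : ℝ) - 1) ∧
    ((∀ j, aa n L A c σ i j ≠ 1/3) →
      ∑ j, aa n L A c σ i j + (1/3) * ∑ j, (w1F n m L c σ i j + w2F n m L c σ i j)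
        + ∑ t, yF n m L c σ i t < (4/3) * (L i : ℝ) - 1) := by
  have hlen : ∀ j : Fin (L i), (1:ℝ) ≤ ((A i j).2 : ℝ) - (A i j).1 + 1 := by
    intro j
    have h1 := (hseg i j).1
    have h2 := (hseg i j).2.1
    have : ((A i j).1 : ℝ) ≤ ((A i j).2 : ℝ) := by exact_mod_cast h2
    linarith
  have hsegm : ∀ (i : Fin n) (j : Fin (L i)), ((A i j).2 : ℝ) ≤ (m:ℝ) := by
    intro i j; exact_mod_cast (hseg i j).2.2
  have hw1le : ∀ j, w1F n m L c σ i j ≤ 1 := by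
    intro j
    rw [w1F, oddI]
    have := V_inter_Ioo_le (Jp n L c σ (Sum.inl ⟨i,j⟩))
      (Coff n L m i + 2 * (tau1 (L i) j) + 1) (Coff n L m i + 2 * (tau1 (L i) j) + 2)
      (by linarith)
    linarith
  have hw2le : ∀ j, w2F n m L c σ i j ≤ 1 := by
    intro j
    rw [w2F, oddI]
    have := V_inter_Ioo_le (Jp n L c σ (Sum.inl ⟨i,j⟩))
      (Coff n L m i + 2 * (tau2 (L i) j) + 1) (Coff n L m i + 2 * (tau2 (L i) j) + 2)
      (by linarith)
    linarith
  have hyle : ∀ t : Fin (L i - 1), yF n m L c σ i t ≤ 1 := by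
    intro t
    rw [yF, evenI]
    have := V_inter_Ioo_le (Jp n L c σ (Sum.inr ⟨i,t⟩))
      (Coff n L m i + 2 * ((t:ℕ):ℝ)) (Coff n L m i + 2 * ((t:ℕ):ℝ) + 1) (by linarith)
    linarith
  have haale : ∀ j, aa n L A c σ i j ≤ 1/3 := by
    intro j
    rw [aa]
    have hV : V (Jp n L c σ (Sum.inl ⟨i,j⟩) ∩ segI n L A i j) ≤
        ((A i j).2 : ℝ) - (A i j).1 + 1 := by
      rw [segI]
      have := V_inter_Ioo_le (Jp n L c σ (Sum.inl ⟨i,j⟩)) (((A i j).1:ℝ) - 1) ((A i j).2:ℝ)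
        (by linarith [hlen j])
      linarith
    have hc : (0:ℝ) < (1/3) / (((A i j).2 : ℝ) - (A i j).1 + 1) := by
      apply div_pos (by norm_num); linarith [hlen j]
    calc (1/3) / (((A i j).2 : ℝ) - (A i j).1 + 1) *
          V (Jp n L c σ (Sum.inl ⟨i,j⟩) ∩ segI n L A i j)
        ≤ (1/3) / (((A i j).2 : ℝ) - (A i j).1 + 1) * (((A i j).2 : ℝ) - (A i j).1 + 1) :=
          mul_le_mul_of_nonneg_left hV (le_of_lt hc)
      _ = 1/3 := div_mul_cancel₀ _ (by linarith [hlen j])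
  have key := comb (L i) (hL3 i) (aa n L A c σ i) (w1F n m L c σ i) (w2F n m L c σ i)
    (yF n m L c σ i)
    (fun j => mul_nonneg (le_of_lt (div_pos (by norm_num) (by linarith [hlen j]))) (V_nonneg _))
    haale
    (fun j => V_nonneg _) (fun j => V_nonneg _) hw1le hw2le
    (fun t => V_nonneg _) hyle
    (fun j => ⟨tau2 (L i) j, (tau_facts (L i) j (hL3 i) j.isLt).2.1⟩)
    (fun j _ _ => by
      simpa using (tau_facts (L i) j (hL3 i) j.isLt).2.2.2)
    (fun j h1 h2 => yF_eq_zero n m L c σ hmono i _ j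
      (engulf_two n m L c σ i j h1 h2 (tau_facts (L i) j (hL3 i) j.isLt).2.2.1))
    (fun j j' h1 h2 h1' h2' heq => by
      by_contra hne
      have s1 := engulf_two n m L c σ i j h1 h2 (tau_facts (L i) j (hL3 i) j.isLt).2.2.1
      have s2 := engulf_two n m L c σ i j' h1' h2' (tau_facts (L i) j' (hL3 i) j'.isLt).2.2.1
      have hτ : tau2 (L i) (j:ℕ) = tau2 (L i) (j':ℕ) := by
        have := congrArg Fin.val heq
        simpa using this
      obtain ⟨z, hz⟩ := evenI_nonempty n m L i (tau2 (L i) j)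
      have hzj := s1 hz
      rw [hτ] at hz
      have hzj' := s2 hz
      have hd := Jp_disjoint n L c σ hmono (p := Sum.inl ⟨i,j⟩) (p' := Sum.inl ⟨i,j'⟩)
        (by
          intro hcon
          apply hne
          have := Sum.inl.inj hcon
          exact eq_of_heq (Sigma.mk.inj_iff.mp this).2)
      exact (Set.disjoint_left.mp hd hzj) hzj')
    (fun j ha hw => yF_eq_zero n m L c σ hmono i _ j
      (engulf_span n m L A c σ hL3 hsegm i j ha hw))
    (fun j j' ha hw ha' hw' => by
      by_contra hne
      have s1 := engulf_span n m L A c σ hL3 hsegm i j ha hw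
      have s2 := engulf_span n m L A c σ hL3 hsegm i j' ha' hw'
      obtain ⟨z, hz⟩ := evenI_nonempty n m L i 0
      have hd := Jp_disjoint n L c σ hmono (p := Sum.inl ⟨i,j⟩) (p' := Sum.inl ⟨i,j'⟩)
        (by
          intro hcon
          apply hne
          have := Sum.inl.inj hcon
          exact eq_of_heq (Sigma.mk.inj_iff.mp this).2)
      exact (Set.disjoint_left.mp hd (s1 hz)) (s2 hz))
    (sum_w_le n m L c σ hmono hL3 i)
  exact key

end Forward4

noncomputable def EF (n m : ℕ) (L : Fin n → ℕ) (A : (i : Fin n) → Fin (L i) → ℕ × ℕ)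
    (c : Fin (Fintype.card (MCPlayer n L) + 1) → ℝ)
    (σ : Fin (Fintype.card (MCPlayer n L)) ≃ MCPlayer n L) : MCPlayer n L → ℝ
  | Sum.inl ⟨i, j⟩ => aa n L A c σ i j + (1/3 * w1F n m L c σ i j + 1/3 * w2F n m L c σ i j)
  | Sum.inr ⟨i, t⟩ => yF n m L c σ i t

lemma forward (n m : ℕ) (hn : 1 ≤ n) (hm : 1 ≤ m)
    (L : Fin n → ℕ) (hL : ∀ i, 3 ≤ L i)
    (A : (i : Fin n) → Fin (L i) → ℕ × ℕ)
    (hseg : ∀ i j, 1 ≤ (A i j).1 ∧ (A i j).1 ≤ (A i j).2 ∧ (A i j).2 ≤ m)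
    (c : Fin (Fintype.card (MCPlayer n L) + 1) → ℝ)
    (σ : Fin (Fintype.card (MCPlayer n L)) ≃ MCPlayer n L)
    (hmono : Monotone c)
    (hwel : ENNReal.ofReal ((4 / 3) * (∑ i, (L i : ℝ)) - n) ≤
        ∑ p : MCPlayer n L,
          mcMeas n m L A p (Ioo (c (σ.symm p).castSucc) (c (σ.symm p).succ))) :
    ∃ ch : (i : Fin n) → Fin (L i), ∀ i i', i ≠ i' →
        Disjoint (Finset.Icc (A i (ch i)).1 (A i (ch i)).2)
          (Finset.Icc (A i' (ch i')).1 (A i' (ch i')).2) := by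
  classical
  have hseg1 : ∀ i j, 1 ≤ (A i j).1 ∧ (A i j).1 ≤ (A i j).2 := fun i j =>
    ⟨(hseg i j).1, (hseg i j).2.1⟩
  -- rewrite welfare in real terms
  have hEnn : ∀ p : MCPlayer n L,
      mcMeas n m L A p (Ioo (c (σ.symm p).castSucc) (c (σ.symm p).succ)) =
        ENNReal.ofReal (EF n m L A c σ p) := by
    rintro (⟨i, j⟩ | ⟨i, t⟩)
    · exact E_eq_seg n m L A c σ hL hseg1 i j
    · exact E_eq_sep n m L A c σ i t
  rw [Finset.sum_congr rfl (fun p _ => hEnn p),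
    ← ENNReal.ofReal_sum_of_nonneg (fun p _ => ?nonneg)] at hwel
  case nonneg =>
    match p with
    | Sum.inl ⟨i, j⟩ =>
      exact add_nonneg (mul_nonneg (le_of_lt (div_pos (by norm_num) (by
        have h2 := (hseg i j).2.1
        have : ((A i j).1 : ℝ) ≤ ((A i j).2 : ℝ) := by exact_mod_cast h2
        linarith))) (V_nonneg _))
        (add_nonneg (mul_nonneg (by norm_num) (V_nonneg _))
          (mul_nonneg (by norm_num) (V_nonneg _)))
    | Sum.inr ⟨i, t⟩ => exact V_nonneg _
  have hwelR : (4 / 3) * (∑ i, (L i : ℝ)) - n ≤ ∑ p : MCPlayer n L, EF n m L A c σ p := by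
    by_contra hcon
    push_neg at hcon
    have := (ENNReal.ofReal_le_ofReal_iff ?q).mp hwel
    · linarith
    case q =>
      apply Finset.sum_nonneg
      intro p _
      match p with
      | Sum.inl ⟨i, j⟩ =>
        exact add_nonneg (mul_nonneg (le_of_lt (div_pos (by norm_num) (by
          have h2 := (hseg i j).2.1
          have : ((A i j).1 : ℝ) ≤ ((A i j).2 : ℝ) := by exact_mod_cast h2
          linarith))) (V_nonneg _))
          (add_nonneg (mul_nonneg (by norm_num) (V_nonneg _))
            (mul_nonneg (by norm_num) (V_nonneg _)))
      | Sum.inr ⟨i, t⟩ => exact V_nonneg _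
  -- regroup the sum per set
  have hregroup : ∑ p : MCPlayer n L, EF n m L A c σ p =
      ∑ i, (∑ j, aa n L A c σ i j
        + (1/3) * ∑ j, (w1F n m L c σ i j + w2F n m L c σ i j)
        + ∑ t, yF n m L c σ i t) := by
    rw [Fintype.sum_sum_type]
    rw [← Finset.univ_sigma_univ, Finset.sum_sigma, ← Finset.univ_sigma_univ, Finset.sum_sigma]
    rw [← Finset.sum_add_distrib]
    apply Finset.sum_congr rfl
    intro i _
    have h1 : ∑ j : Fin (L i), EF n m L A c σ (Sum.inl ⟨i, j⟩)
        = ∑ j, aa n L A c σ i j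
          + (1/3) * ∑ j, (w1F n m L c σ i j + w2F n m L c σ i j) := by
      rw [Finset.mul_sum, ← Finset.sum_add_distrib]
      apply Finset.sum_congr rfl
      intro j _
      show aa n L A c σ i j + (1/3 * w1F n m L c σ i j + 1/3 * w2F n m L c σ i j) = _
      ring
    have h2 : ∑ t : Fin (L i - 1), EF n m L A c σ (Sum.inr ⟨i, t⟩) = ∑ t, yF n m L c σ i t :=
      rfl
    rw [h1, h2]
  rw [hregroup] at hwelR
  -- per-set bounds
  have hbound := fun i => (set_bound n m L A c σ hmono hL hseg i).1
  have htarget : ∑ i, ((4/3) * (L i : ℝ) - 1) = (4 / 3) * (∑ i, (L i : ℝ)) - n := by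
    rw [Finset.sum_sub_distrib, ← Finset.mul_sum, Finset.sum_const, Finset.card_univ,
      Fintype.card_fin, nsmul_eq_mul, mul_one]
  -- equality for each set
  have heq : ∀ i, ∑ j, aa n L A c σ i j
      + (1/3) * ∑ j, (w1F n m L c σ i j + w2F n m L c σ i j)
      + ∑ t, yF n m L c σ i t = (4/3) * (L i : ℝ) - 1 := by
    by_contra hcon
    push_neg at hcon
    obtain ⟨i0, hi0⟩ := hcon
    have hlt : ∑ i, (∑ j, aa n L A c σ i j
        + (1/3) * ∑ j, (w1F n m L c σ i j + w2F n m L c σ i j)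
        + ∑ t, yF n m L c σ i t) < ∑ i, ((4/3) * (L i : ℝ) - 1) :=
      Finset.sum_lt_sum (fun i _ => hbound i)
        ⟨i0, Finset.mem_univ i0, lt_of_le_of_ne (hbound i0) hi0⟩
    rw [htarget] at hlt
    linarith
  -- extract a full-segment player in each set
  have hfull : ∀ i, ∃ j, aa n L A c σ i j = 1/3 := by
    intro i
    by_contra hcon
    push_neg at hcon
    have := (set_bound n m L A c σ hmono hL hseg i).2 hcon
    rw [heq i] at this
    exact lt_irrefl _ this
  choose ch hch using hfull
  refine ⟨ch, ?_⟩
  intro i i' hii'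
  by_contra hnd
  obtain ⟨x, hx1, hx2⟩ := Finset.not_disjoint_iff.mp hnd
  rw [Finset.mem_Icc] at hx1 hx2
  -- both chosen pieces almost contain their segments
  have hVfull : ∀ i : Fin n, volume (segI n L A i (ch i) \ Jp n L c σ (Sum.inl ⟨i, ch i⟩)) = 0 := by
    intro i
    have hlen : (1:ℝ) ≤ ((A i (ch i)).2 : ℝ) - (A i (ch i)).1 + 1 := by
      have h2 := (hseg i (ch i)).2.1
      have : ((A i (ch i)).1 : ℝ) ≤ ((A i (ch i)).2 : ℝ) := by exact_mod_cast h2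
      linarith
    have hV : V (Jp n L c σ (Sum.inl ⟨i, ch i⟩) ∩ segI n L A i (ch i)) =
        ((A i (ch i)).2 : ℝ) - (A i (ch i)).1 + 1 := by
      have h := hch i
      rw [aa] at h
      have hd : ((1:ℝ)/3) / (((A i (ch i)).2 : ℝ) - (A i (ch i)).1 + 1) ≠ 0 := by
        apply div_ne_zero (by norm_num); linarith
      field_simp at h
      linarith
    have hvol : volume (Jp n L c σ (Sum.inl ⟨i, ch i⟩) ∩ segI n L A i (ch i)) =
        volume (segI n L A i (ch i)) := by
      rw [← ENNReal.toReal_eq_toReal_iff' (by rw [segI]; exact vol_inter_Ioo_ne_top _ _ _)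
        (by rw [segI, Real.volume_Ioo]; exact ENNReal.ofReal_ne_top)]
      rw [show volume (segI n L A i (ch i)) = ENNReal.ofReal
        (((A i (ch i)).2 : ℝ) - (((A i (ch i)).1 : ℝ) - 1)) by rw [segI, Real.volume_Ioo]]
      rw [ENNReal.toReal_ofReal (by linarith)]
      rw [show (volume (Jp n L c σ (Sum.inl ⟨i, ch i⟩) ∩ segI n L A i (ch i))).toReal
        = V (Jp n L c σ (Sum.inl ⟨i, ch i⟩) ∩ segI n L A i (ch i)) from rfl]
      rw [hV]; ring
    have hiad := measure_inter_add_diff (μ := (volume : Measure ℝ))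
      (segI n L A i (ch i)) (t := Jp n L c σ (Sum.inl ⟨i, ch i⟩)) (by rw [Jp]; exact measurableSet_Ioo)
    rw [Set.inter_comm, hvol] at hiad
    have hfin : volume (segI n L A i (ch i)) ≠ ⊤ := by
      rw [segI, Real.volume_Ioo]; exact ENNReal.ofReal_ne_top
    nth_rewrite 2 [← add_zero (volume (segI n L A i (ch i)))] at hiad
    exact (ENNReal.add_right_inj hfin).mp hiad
  -- the common unit interval
  set U : Set ℝ := Ioo ((x:ℝ) - 1) (x:ℝ) with hU
  have hUsub : ∀ (i0 : Fin n), (A i0 (ch i0)).1 ≤ x → x ≤ (A i0 (ch i0)).2 →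
      U ⊆ segI n L A i0 (ch i0) := by
    intro i0 h1 h2
    rw [hU, segI]
    apply Set.Ioo_subset_Ioo
    · have : ((A i0 (ch i0)).1 : ℝ) ≤ (x:ℝ) := by exact_mod_cast h1
      linarith
    · exact_mod_cast h2
  have hU1 := hUsub i hx1.1 hx1.2
  have hU2 := hUsub i' hx2.1 hx2.2
  have hdiffle : volume (U \ (Jp n L c σ (Sum.inl ⟨i, ch i⟩) ∩ Jp n L c σ (Sum.inl ⟨i', ch i'⟩)))
      = 0 := by
    have hsplit : U \ (Jp n L c σ (Sum.inl ⟨i, ch i⟩) ∩ Jp n L c σ (Sum.inl ⟨i', ch i'⟩)) ⊆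
        (segI n L A i (ch i) \ Jp n L c σ (Sum.inl ⟨i, ch i⟩)) ∪
        (segI n L A i' (ch i') \ Jp n L c σ (Sum.inl ⟨i', ch i'⟩)) := by
      rw [Set.diff_inter]
      exact Set.union_subset_union (Set.diff_subset_diff_left hU1)
        (Set.diff_subset_diff_left hU2)
    refine le_antisymm ?_ (zero_le)
    calc volume _ ≤ volume ((segI n L A i (ch i) \ Jp n L c σ (Sum.inl ⟨i, ch i⟩)) ∪
        (segI n L A i' (ch i') \ Jp n L c σ (Sum.inl ⟨i', ch i'⟩))) := measure_mono hsplit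
      _ ≤ volume (segI n L A i (ch i) \ Jp n L c σ (Sum.inl ⟨i, ch i⟩)) +
          volume (segI n L A i' (ch i') \ Jp n L c σ (Sum.inl ⟨i', ch i'⟩)) := measure_union_le _ _
      _ = 0 := by rw [hVfull i, hVfull i', add_zero]
  have hUvol : volume U = ENNReal.ofReal 1 := by
    rw [hU, Real.volume_Ioo]; norm_num
  have hinter : volume (U ∩ (Jp n L c σ (Sum.inl ⟨i, ch i⟩) ∩ Jp n L c σ (Sum.inl ⟨i', ch i'⟩)))
      ≠ 0 := by
    intro hz
    have hle := measure_le_inter_add_diff (μ := (volume : Measure ℝ)) U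
      (Jp n L c σ (Sum.inl ⟨i, ch i⟩) ∩ Jp n L c σ (Sum.inl ⟨i', ch i'⟩))
    rw [hz, hdiffle, add_zero, hUvol] at hle
    simp at hle
  obtain ⟨z, hz⟩ := nonempty_of_measure_ne_zero hinter
  have hd := Jp_disjoint n L c σ hmono (p := Sum.inl ⟨i, ch i⟩) (p' := Sum.inl ⟨i', ch i'⟩)
    (by
      intro hcon
      apply hii'
      have := Sum.inl.inj hcon
      exact congrArg Sigma.fst this)
  exact (Set.disjoint_left.mp hd hz.2.1) hz.2.2

section Backward

variable (n m : ℕ) (L : Fin n → ℕ) (A : (i : Fin n) → Fin (L i) → ℕ × ℕ)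
  (ch : (i : Fin n) → Fin (L i))

/-- natural-number offset of zone i -/
def Onat (i : Fin n) : ℕ := 2 * ∑ i' ∈ Finset.univ.filter (· < i), (L i' - 1)

/-- position of the key block of a non-chosen segment player -/
def ttn (i : Fin n) (j : Fin (L i)) : ℕ := if (j:ℕ) < (ch i : ℕ) then j else (j:ℕ) - 1

/-- left endpoint (an integer) of the intended piece of each player -/
def keyF : MCPlayer n L → ℕ
  | Sum.inl ⟨i, j⟩ => if j = ch i then (A i j).1 - 1 else m + Onat n L i + 2 * ttn n L ch i j + 1
  | Sum.inr ⟨i, t⟩ => m + Onat n L i + 2 * t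

/-- right endpoint of the intended piece -/
def rkeyF : MCPlayer n L → ℕ
  | Sum.inl ⟨i, j⟩ => if j = ch i then (A i j).2 else m + Onat n L i + 2 * ttn n L ch i j + 2
  | Sum.inr ⟨i, t⟩ => m + Onat n L i + 2 * t + 1

def MnatF : ℕ := m + 2 * ∑ i, (L i - 1)

lemma Onat_cast (hL3 : ∀ i, 3 ≤ L i) (i : Fin n) :
    (m : ℝ) + (Onat n L i : ℝ) = Coff n L m i := by
  rw [Onat, Coff]
  push_cast
  congr 1
  rw [Finset.mul_sum, Finset.mul_sum]
  apply Finset.sum_congr rfl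
  intro i' _
  rw [Nat.cast_sub (by have := hL3 i'; omega)]
  ring

lemma Onat_zone (hL3 : ∀ i, 3 ≤ L i) {i i' : Fin n} (h : i < i') :
    Onat n L i + 2 * (L i - 1) ≤ Onat n L i' := by
  rw [Onat, Onat, ← Nat.mul_add 2]
  apply Nat.mul_le_mul_left
  have hsub : insert i (Finset.univ.filter (· < i)) ⊆ Finset.univ.filter (· < i') := by
    intro x hx
    rw [Finset.mem_insert] at hx
    rw [Finset.mem_filter]
    rcases hx with rfl | hx
    · exact ⟨Finset.mem_univ _, h⟩
    · rw [Finset.mem_filter] at hx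
      exact ⟨Finset.mem_univ _, lt_trans hx.2 h⟩
  calc ∑ i'' ∈ Finset.univ.filter (· < i), (L i'' - 1) + (L i - 1)
      = ∑ i'' ∈ insert i (Finset.univ.filter (· < i)), (L i'' - 1) := by
        rw [Finset.sum_insert (by rw [Finset.mem_filter]; exact fun hh => lt_irrefl i hh.2)]
        ring
    _ ≤ _ := Finset.sum_le_sum_of_subset hsub

lemma Onat_le_total (hL3 : ∀ i, 3 ≤ L i) (i : Fin n) :
    Onat n L i + 2 * (L i - 1) ≤ 2 * ∑ i'', (L i'' - 1) := by
  rw [Onat, ← Nat.mul_add 2]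
  apply Nat.mul_le_mul_left
  have hsub : insert i (Finset.univ.filter (· < i)) ⊆ Finset.univ :=
    fun x _ => Finset.mem_univ x
  calc ∑ i'' ∈ Finset.univ.filter (· < i), (L i'' - 1) + (L i - 1)
      = ∑ i'' ∈ insert i (Finset.univ.filter (· < i)), (L i'' - 1) := by
        rw [Finset.sum_insert (by rw [Finset.mem_filter]; exact fun hh => lt_irrefl i hh.2)]
        ring
    _ ≤ _ := Finset.sum_le_sum_of_subset hsub

lemma ttn_lt (hL3 : ∀ i, 3 ≤ L i) (i : Fin n) (j : Fin (L i)) (hj : j ≠ ch i) :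
    ttn n L ch i j < L i - 1 := by
  have h1 : (j:ℕ) < L i := j.isLt
  have h2 : ((ch i):ℕ) < L i := (ch i).isLt
  have h3 : (j:ℕ) ≠ ((ch i):ℕ) := fun h => hj (Fin.ext h)
  have := hL3 i
  rw [ttn]; split_ifs <;> omega

lemma ttn_tau (hL3 : ∀ i, 3 ≤ L i) (i : Fin n) (j : Fin (L i)) (hj : j ≠ ch i) :
    ttn n L ch i j = tau1 (L i) j ∨ ttn n L ch i j = tau2 (L i) j := by
  have h1 : (j:ℕ) < L i := j.isLt
  have h2 : ((ch i):ℕ) < L i := (ch i).isLt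
  have h3 : (j:ℕ) ≠ ((ch i):ℕ) := fun h => hj (Fin.ext h)
  have := hL3 i
  rw [ttn, tau1, tau2]; split_ifs <;> omega

end Backward

section Backward2

variable (n m : ℕ) (L : Fin n → ℕ) (A : (i : Fin n) → Fin (L i) → ℕ × ℕ)
  (ch : (i : Fin n) → Fin (L i))

lemma zone_eq (hL3 : ∀ i, 3 ≤ L i) {i i' : Fin n} {s s' : ℕ}
    (hs : s < 2 * (L i - 1)) (hs' : s' < 2 * (L i' - 1))
    (h : Onat n L i + s = Onat n L i' + s') : i = i' ∧ s = s' := by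
  rcases lt_trichotomy i i' with hlt | heq | hgt
  · exfalso
    have := Onat_zone n L hL3 hlt
    omega
  · subst heq
    exact ⟨rfl, by omega⟩
  · exfalso
    have := Onat_zone n L hL3 hgt
    omega

variable (hL3 : ∀ i, 3 ≤ L i)
  (hseg : ∀ i j, 1 ≤ (A i j).1 ∧ (A i j).1 ≤ (A i j).2 ∧ (A i j).2 ≤ m)
  (hord : ∀ i i', i ≠ i' →
    (A i (ch i)).2 < (A i' (ch i')).1 ∨ (A i' (ch i')).2 < (A i (ch i)).1)

include hL3 hseg hord

lemma key_inj : Function.Injective (keyF n m L A ch) := by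
  have hb : ∀ i (j : Fin (L i)), 1 ≤ (A i j).1 ∧ (A i j).1 ≤ (A i j).2 ∧ (A i j).2 ≤ m :=
    hseg
  rintro (⟨i, j⟩ | ⟨i, t⟩) (⟨i', j'⟩ | ⟨i', t'⟩) heq
  · rw [keyF, keyF] at heq
    by_cases h1 : j = ch i <;> by_cases h2 : j' = ch i'
    · rw [if_pos h1, if_pos h2] at heq
      have hii : i = i' := by
        by_contra hne
        have h3 := hb i j
        have h4 := hb i' j'
        rcases hord i i' hne with h | h <;> (subst h1; subst h2; omega)
      subst hii
      subst h1; subst h2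
      rfl
    · exfalso
      rw [if_pos h1, if_neg h2] at heq
      have h3 := hb i j
      subst h1
      omega
    · exfalso
      rw [if_neg h1, if_pos h2] at heq
      have h3 := hb i' j'
      subst h2
      omega
    · rw [if_neg h1, if_neg h2] at heq
      have hz := zone_eq n L hL3 (i := i) (i' := i') (s := 2 * ttn n L ch i j + 1)
        (s' := 2 * ttn n L ch i' j' + 1) ?s1 ?s2 (by omega)
      case s1 => have := ttn_lt n L ch hL3 i j h1; omega
      case s2 => have := ttn_lt n L ch hL3 i' j' h2; omega
      obtain ⟨hii, hss⟩ := hz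
      subst hii
      have hjj : (j:ℕ) = (j':ℕ) := by
        have e1 := ttn_lt n L ch hL3 i j h1
        have e2 := ttn_lt n L ch hL3 i j' h2
        have h3 : (j:ℕ) ≠ ((ch i):ℕ) := fun h => h1 (Fin.ext h)
        have h4 : (j':ℕ) ≠ ((ch i):ℕ) := fun h => h2 (Fin.ext h)
        rw [ttn, ttn] at hss
        split_ifs at hss <;> omega
      rw [Fin.ext hjj]
  · exfalso
    rw [keyF, keyF] at heq
    by_cases h1 : j = ch i
    · rw [if_pos h1] at heq
      have h3 := hb i j
      subst h1
      omega
    · rw [if_neg h1] at heq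
      have hz := zone_eq n L hL3 (i := i) (i' := i') (s := 2 * ttn n L ch i j + 1)
        (s' := 2 * (t':ℕ)) ?s1 ?s2 (by omega)
      case s1 => have := ttn_lt n L ch hL3 i j h1; omega
      case s2 => have := t'.isLt; omega
      omega
  · exfalso
    rw [keyF, keyF] at heq
    by_cases h2 : j' = ch i'
    · rw [if_pos h2] at heq
      have h3 := hb i' j'
      subst h2
      omega
    · rw [if_neg h2] at heq
      have hz := zone_eq n L hL3 (i := i) (i' := i') (s := 2 * (t:ℕ))
        (s' := 2 * ttn n L ch i' j' + 1) ?s1 ?s2 (by omega)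
      case s1 => have := t.isLt; omega
      case s2 => have := ttn_lt n L ch hL3 i' j' h2; omega
      omega
  · rw [keyF, keyF] at heq
    have hz := zone_eq n L hL3 (i := i) (i' := i') (s := 2 * (t:ℕ)) (s' := 2 * (t':ℕ))
      (by have := t.isLt; omega) (by have := t'.isLt; omega) (by omega)
    obtain ⟨hii, hss⟩ := hz
    subst hii
    have : (t:ℕ) = (t':ℕ) := by omega
    rw [Fin.ext this]

lemma key_lt_rkey_lem : ∀ p, keyF n m L A ch p < rkeyF n m L A ch p := by
  rintro (⟨i, j⟩ | ⟨i, t⟩)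
  · rw [keyF, rkeyF]
    by_cases h1 : j = ch i
    · rw [if_pos h1, if_pos h1]
      have h3 := hseg i j
      omega
    · rw [if_neg h1, if_neg h1]
      omega
  · rw [keyF, rkeyF]
    omega

lemma rkey_le_M_lem : ∀ p, rkeyF n m L A ch p ≤ MnatF n m L := by
  rintro (⟨i, j⟩ | ⟨i, t⟩)
  · rw [rkeyF, MnatF]
    by_cases h1 : j = ch i
    · rw [if_pos h1]
      have h3 := hseg i j
      omega
    · rw [if_neg h1]
      have h4 := Onat_le_total n L hL3 i
      have h5 := ttn_lt n L ch hL3 i j h1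
      omega
  · rw [rkeyF, MnatF]
    have h4 := Onat_le_total n L hL3 i
    have h5 := t.isLt
    omega

lemma rkey_le_key_lem : ∀ p p', keyF n m L A ch p < keyF n m L A ch p' →
    rkeyF n m L A ch p ≤ keyF n m L A ch p' := by
  rintro (⟨i, j⟩ | ⟨i, t⟩) p' hlt
  · by_cases h1 : j = ch i
    · -- p is a chosen segment player
      rw [keyF, if_pos h1] at hlt
      rw [rkeyF, if_pos h1]
      -- case on p'
      rcases p' with ⟨i', j'⟩ | ⟨i', t'⟩
      · rw [keyF] at hlt ⊢
        by_cases h2 : j' = ch i'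
        · rw [if_pos h2] at hlt ⊢
          have hii : i ≠ i' := by
            intro hcon
            subst hcon
            subst h1; subst h2
            omega
          have h3 := hseg i j
          have h4 := hseg i' j'
          subst h1; subst h2
          rcases hord i i' hii with h | h <;> omega
        · rw [if_neg h2] at hlt ⊢
          have h3 := hseg i j
          subst h1
          omega
      · rw [keyF] at hlt ⊢
        have h3 := hseg i j
        subst h1
        omega
    · rw [keyF, if_neg h1] at hlt
      rw [rkeyF, if_neg h1]
      omega
  · rw [keyF] at hlt
    rw [rkeyF]
    omega

end Backward2

section Backward3

variable (n m : ℕ) (L : Fin n → ℕ) (A : (i : Fin n) → Fin (L i) → ℕ × ℕ)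
  (ch : (i : Fin n) → Fin (L i))

lemma keyIoo_sep (hL3 : ∀ i, 3 ≤ L i) (i : Fin n) (t : Fin (L i - 1)) :
    Ioo ((keyF n m L A ch (Sum.inr ⟨i,t⟩) : ℝ)) ((rkeyF n m L A ch (Sum.inr ⟨i,t⟩) : ℝ))
      = evenI n m L i t := by
  rw [keyF, rkeyF, evenI, ← Onat_cast n m L hL3 i]
  push_cast
  ring_nf

lemma keyIoo_chosen (hseg1 : ∀ i j, 1 ≤ (A i j).1) (i : Fin n) :
    Ioo ((keyF n m L A ch (Sum.inl ⟨i, ch i⟩) : ℝ)) ((rkeyF n m L A ch (Sum.inl ⟨i, ch i⟩) : ℝ))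
      = segI n L A i (ch i) := by
  rw [keyF, rkeyF, if_pos rfl, if_pos rfl, segI, Nat.cast_sub (hseg1 i (ch i)), Nat.cast_one]

lemma keyIoo_free (hL3 : ∀ i, 3 ≤ L i) (i : Fin n) (j : Fin (L i)) (hj : j ≠ ch i) :
    Ioo ((keyF n m L A ch (Sum.inl ⟨i,j⟩) : ℝ)) ((rkeyF n m L A ch (Sum.inl ⟨i,j⟩) : ℝ))
      = oddI n m L i (ttn n L ch i j) := by
  rw [keyF, rkeyF, if_neg hj, if_neg hj, oddI, ← Onat_cast n m L hL3 i]
  push_cast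
  ring_nf

lemma meas_lb_sep (hL3 : ∀ i, 3 ≤ L i) (i : Fin n) (t : Fin (L i - 1)) {S : Set ℝ}
    (hS : MeasurableSet S)
    (hsub : Ioo ((keyF n m L A ch (Sum.inr ⟨i,t⟩) : ℝ))
      ((rkeyF n m L A ch (Sum.inr ⟨i,t⟩) : ℝ)) ⊆ S) :
    ENNReal.ofReal 1 ≤ mcMeas n m L A (Sum.inr ⟨i,t⟩) S := by
  rw [mcMeas_sep_apply n m L A i t hS]
  rw [keyIoo_sep n m L A ch hL3 i t] at hsub
  rw [Set.inter_eq_self_of_subset_right hsub, evenI, Real.volume_Ioo]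
  apply ENNReal.ofReal_le_ofReal
  ring_nf
  linarith

lemma meas_lb_chosen (hL3 : ∀ i, 3 ≤ L i)
    (hseg : ∀ i j, 1 ≤ (A i j).1 ∧ (A i j).1 ≤ (A i j).2 ∧ (A i j).2 ≤ m)
    (i : Fin n) {S : Set ℝ} (hS : MeasurableSet S)
    (hsub : Ioo ((keyF n m L A ch (Sum.inl ⟨i, ch i⟩) : ℝ))
      ((rkeyF n m L A ch (Sum.inl ⟨i, ch i⟩) : ℝ)) ⊆ S) :
    ENNReal.ofReal (1/3) ≤ mcMeas n m L A (Sum.inl ⟨i, ch i⟩) S := by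
  rw [mcMeas_seg_apply n m L A hL3 i (ch i) hS]
  rw [keyIoo_chosen n m L A ch (fun i j => (hseg i j).1) i] at hsub
  have hlen : (1:ℝ) ≤ ((A i (ch i)).2 : ℝ) - (A i (ch i)).1 + 1 := by
    have h2 := (hseg i (ch i)).2.1
    have : ((A i (ch i)).1 : ℝ) ≤ ((A i (ch i)).2 : ℝ) := by exact_mod_cast h2
    linarith
  refine le_trans ?_ le_self_add
  rw [Set.inter_eq_self_of_subset_right hsub, segI, Real.volume_Ioo,
    ← ENNReal.ofReal_mul (le_of_lt (div_pos (by norm_num) (by linarith)))]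
  apply ENNReal.ofReal_le_ofReal
  rw [show ((A i (ch i)).2 : ℝ) - (((A i (ch i)).1 : ℝ) - 1)
    = ((A i (ch i)).2 : ℝ) - ((A i (ch i)).1 : ℝ) + 1 by ring,
    div_mul_cancel₀ _ (by linarith : ((A i (ch i)).2 : ℝ) - ((A i (ch i)).1 : ℝ) + 1 ≠ 0)]

lemma meas_lb_free (hL3 : ∀ i, 3 ≤ L i) (i : Fin n) (j : Fin (L i)) (hj : j ≠ ch i)
    {S : Set ℝ} (hS : MeasurableSet S)
    (hsub : Ioo ((keyF n m L A ch (Sum.inl ⟨i,j⟩) : ℝ))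
      ((rkeyF n m L A ch (Sum.inl ⟨i,j⟩) : ℝ)) ⊆ S) :
    ENNReal.ofReal (1/3) ≤ mcMeas n m L A (Sum.inl ⟨i,j⟩) S := by
  rw [mcMeas_seg_apply n m L A hL3 i j hS]
  rw [keyIoo_free n m L A ch hL3 i j hj] at hsub
  have hvol : volume (S ∩ oddI n m L i (ttn n L ch i j)) = ENNReal.ofReal 1 := by
    rw [Set.inter_eq_self_of_subset_right hsub, oddI_vol]
  rcases ttn_tau n L ch hL3 i j hj with h | h
  · rw [h] at hvol
    refine le_trans ?_ (le_add_left le_self_add)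
    rw [hvol, ENNReal.ofReal_one, mul_one]
  · rw [h] at hvol
    refine le_trans ?_ (le_add_left le_add_self)
    rw [hvol, ENNReal.ofReal_one, mul_one]

end Backward3

lemma backward (n m : ℕ) (hn : 1 ≤ n) (hm : 1 ≤ m)
    (L : Fin n → ℕ) (hL : ∀ i, 3 ≤ L i)
    (A : (i : Fin n) → Fin (L i) → ℕ × ℕ)
    (hseg : ∀ i j, 1 ≤ (A i j).1 ∧ (A i j).1 ≤ (A i j).2 ∧ (A i j).2 ≤ m)
    (ch : (i : Fin n) → Fin (L i))
    (hdisj : ∀ i i', i ≠ i' →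
        Disjoint (Finset.Icc (A i (ch i)).1 (A i (ch i)).2)
          (Finset.Icc (A i' (ch i')).1 (A i' (ch i')).2)) :
    ∃ (c : Fin (Fintype.card (MCPlayer n L) + 1) → ℝ)
      (σ : Fin (Fintype.card (MCPlayer n L)) ≃ MCPlayer n L),
      Monotone c ∧ c 0 = 0 ∧
      c (Fin.last _) = m + 2 * ∑ i, ((L i : ℝ) - 1) ∧
      ENNReal.ofReal ((4 / 3) * (∑ i, (L i : ℝ)) - n) ≤
        ∑ p : MCPlayer n L,
          mcMeas n m L A p (Ioo (c (σ.symm p).castSucc) (c (σ.symm p).succ)) := by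
  classical
  have hord : ∀ i i', i ≠ i' →
      (A i (ch i)).2 < (A i' (ch i')).1 ∨ (A i' (ch i')).2 < (A i (ch i)).1 := by
    intro i i' hne
    by_contra hcon
    push_neg at hcon
    obtain ⟨h1, h2⟩ := hcon
    have hb1 := hseg i (ch i)
    have hb2 := hseg i' (ch i')
    set x := max (A i (ch i)).1 (A i' (ch i')).1 with hx
    have hx1 : x ∈ Finset.Icc (A i (ch i)).1 (A i (ch i)).2 := by
      rw [Finset.mem_Icc]; omega
    have hx2 : x ∈ Finset.Icc (A i' (ch i')).1 (A i' (ch i')).2 := by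
      rw [Finset.mem_Icc]; omega
    exact (Finset.disjoint_left.mp (hdisj i i' hne) hx1) hx2
  have hinj := key_inj n m L A ch hL hseg hord
  have hklr := key_lt_rkey_lem n m L A ch hL hseg hord
  have hrM := rkey_le_M_lem n m L A ch hL hseg hord
  have hrk := rkey_le_key_lem n m L A ch hL hseg hord
  set N := Fintype.card (MCPlayer n L) with hN
  have hNpos : 1 ≤ N := by
    rw [hN]
    refine Fintype.card_pos_iff.mpr ⟨Sum.inl ⟨⟨0, hn⟩, ⟨0, by have := hL ⟨0, hn⟩; omega⟩⟩⟩
  have hscard : (Finset.univ.image (keyF n m L A ch)).card = N := by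
    rw [Finset.card_image_of_injective _ hinj, Finset.card_univ, hN]
  have hmem : ∀ k : Fin N, ∃ p : MCPlayer n L,
      keyF n m L A ch p = (Finset.univ.image (keyF n m L A ch)).orderEmbOfFin hscard k := by
    intro k
    have h1 := Finset.orderEmbOfFin_mem (Finset.univ.image (keyF n m L A ch)) hscard k
    rw [Finset.mem_image] at h1
    obtain ⟨p, _, hp⟩ := h1
    exact ⟨p, hp⟩
  let e : Fin N → MCPlayer n L := fun k => Classical.choose (hmem k)
  have hkey_e : ∀ k, keyF n m L A ch (e k) =
      (Finset.univ.image (keyF n m L A ch)).orderEmbOfFin hscard k :=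
    fun k => Classical.choose_spec (hmem k)
  have hkey_mono : ∀ {k k' : Fin N}, k < k' →
      keyF n m L A ch (e k) < keyF n m L A ch (e k') := by
    intro k k' hlt
    rw [hkey_e, hkey_e]
    exact ((Finset.univ.image (keyF n m L A ch)).orderEmbOfFin hscard).strictMono hlt
  have hebij : Function.Bijective e := by
    rw [Fintype.bijective_iff_injective_and_card]
    constructor
    · intro k k' hkk
      by_contra hne
      rcases lt_or_gt_of_ne hne with h | h
      · exact absurd (congrArg (keyF n m L A ch) hkk) (ne_of_lt (hkey_mono h))
      · exact absurd (congrArg (keyF n m L A ch) hkk).symm (ne_of_lt (hkey_mono h))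
    · rw [hN, Fintype.card_fin]
  set c : Fin (N + 1) → ℝ := fun v =>
    if h0 : (v : ℕ) = 0 then 0
    else if hn' : (v : ℕ) = N then ((MnatF n m L : ℕ) : ℝ)
    else (keyF n m L A ch (e ⟨(v : ℕ), by have := v.isLt; omega⟩) : ℝ) with hc
  have hMcast : ((MnatF n m L : ℕ) : ℝ) = (m : ℝ) + 2 * ∑ i, ((L i : ℝ) - 1) := by
    rw [MnatF]
    push_cast
    congr 1
    rw [Finset.mul_sum, Finset.mul_sum]
    apply Finset.sum_congr rfl
    intro i _
    rw [Nat.cast_sub (by have := hL i; omega)]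
    ring
  have hkeyM : ∀ p, (keyF n m L A ch p : ℝ) < ((MnatF n m L : ℕ) : ℝ) := by
    intro p
    have h1 := hklr p
    have h2 := hrM p
    have h3 : keyF n m L A ch p < MnatF n m L := by omega
    exact_mod_cast h3
  have hcv : ∀ (v : Fin (N+1)) (h1 : (v:ℕ) ≠ 0) (h2 : (v:ℕ) ≠ N),
      c v = (keyF n m L A ch (e ⟨(v : ℕ), by have := v.isLt; omega⟩) : ℝ) := by
    intro v h1 h2
    rw [hc]
    simp only [dif_neg h1, dif_neg h2]
  have hc0' : ∀ (v : Fin (N+1)), (v:ℕ) = 0 → c v = 0 := by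
    intro v hv
    rw [hc]
    exact dif_pos hv
  have hcN' : ∀ (v : Fin (N+1)), (v:ℕ) ≠ 0 → (v:ℕ) = N → c v = ((MnatF n m L : ℕ) : ℝ) := by
    intro v h1 h2
    rw [hc]
    simp only [dif_neg h1, dif_pos h2]
  have hc_le_M : ∀ v, c v ≤ ((MnatF n m L : ℕ) : ℝ) := by
    intro v
    by_cases h0 : (v:ℕ) = 0
    · rw [hc0' v h0]
      positivity
    · by_cases h1 : (v:ℕ) = N
      · rw [hcN' v h0 h1]
      · rw [hcv v h0 h1]
        exact le_of_lt (hkeyM _)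
  have hc_nonneg : ∀ v, 0 ≤ c v := by
    intro v
    by_cases h0 : (v:ℕ) = 0
    · rw [hc0' v h0]
    · by_cases h1 : (v:ℕ) = N
      · rw [hcN' v h0 h1]; positivity
      · rw [hcv v h0 h1]; positivity
  have hmono : Monotone c := by
    intro v v' hle
    have hvv : (v:ℕ) ≤ (v':ℕ) := hle
    by_cases h0 : (v:ℕ) = 0
    · rw [hc0' v h0]; exact hc_nonneg v'
    · by_cases h1 : (v:ℕ) = N
      · have h2 : (v':ℕ) = N := by have := v'.isLt; omega
        rw [hcN' v h0 h1, hcN' v' (by omega) h2]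
      · rw [hcv v h0 h1]
        by_cases h0' : (v':ℕ) = 0
        · omega
        · by_cases h1' : (v':ℕ) = N
          · rw [hcN' v' h0' h1']
            exact le_of_lt (hkeyM _)
          · rw [hcv v' h0' h1']
            rcases eq_or_lt_of_le hvv with heq | hlt
            · have : (⟨(v:ℕ), by have := v.isLt; omega⟩ : Fin N)
                  = ⟨(v':ℕ), by have := v'.isLt; omega⟩ := Fin.ext heq
              rw [this]
            · have hfin : (⟨(v:ℕ), by have := v.isLt; omega⟩ : Fin N)
                  < (⟨(v':ℕ), by have := v'.isLt; omega⟩ : Fin N) := hlt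
              exact le_of_lt (by exact_mod_cast hkey_mono hfin)
  refine ⟨c, Equiv.ofBijective e hebij, hmono, hc0' 0 rfl, ?_, ?_⟩
  · rw [hcN' (Fin.last N) (by rw [Fin.val_last]; omega) (Fin.val_last N), hMcast]
  -- welfare bound
  have hpiece : ∀ k : Fin N, Ioo ((keyF n m L A ch (e k) : ℝ)) ((rkeyF n m L A ch (e k) : ℝ))
      ⊆ Ioo (c k.castSucc) (c k.succ) := by
    intro k
    apply Set.Ioo_subset_Ioo
    · by_cases h0 : ((k.castSucc : Fin (N+1)) : ℕ) = 0
      · rw [hc0' _ h0]; positivity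
      · have h1 : ((k.castSucc : Fin (N+1)) : ℕ) ≠ N := by
          rw [Fin.coe_castSucc]; have := k.isLt; omega
        rw [hcv _ h0 h1]
    · have h0 : ((k.succ : Fin (N+1)) : ℕ) ≠ 0 := by rw [Fin.val_succ]; omega
      by_cases h1 : ((k.succ : Fin (N+1)) : ℕ) = N
      · rw [hcN' _ h0 h1]
        exact_mod_cast hrM (e k)
      · rw [hcv _ h0 h1]
        have hlt : k < (⟨((k.succ : Fin (N+1)) : ℕ), by have := k.succ.isLt; omega⟩ : Fin N) := by
          rw [Fin.lt_def]
          simp [Fin.val_succ]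
        have := hrk (e k) (e ⟨((k.succ : Fin (N+1)) : ℕ), by have := k.succ.isLt; omega⟩)
          (hkey_mono hlt)
        exact_mod_cast this
  set σ : Fin N ≃ MCPlayer n L := Equiv.ofBijective e hebij with hσ
  have heσ : ∀ p : MCPlayer n L, e (σ.symm p) = p := fun p => σ.apply_symm_apply p
  have hlb : ∀ p : MCPlayer n L,
      ENNReal.ofReal (Sum.elim (fun _ => (1:ℝ)/3) (fun _ => (1:ℝ)) p) ≤
        mcMeas n m L A p (Ioo (c (σ.symm p).castSucc) (c (σ.symm p).succ)) := by
    intro p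
    have hsubp : Ioo ((keyF n m L A ch p : ℝ)) ((rkeyF n m L A ch p : ℝ)) ⊆
        Ioo (c (σ.symm p).castSucc) (c (σ.symm p).succ) := by
      have := hpiece (σ.symm p)
      rw [heσ p] at this
      exact this
    rcases p with ⟨i, j⟩ | ⟨i, t⟩
    · show ENNReal.ofReal (1/3) ≤ _
      by_cases hj : j = ch i
      · subst hj
        exact meas_lb_chosen n m L A ch hL hseg i measurableSet_Ioo hsubp
      · exact meas_lb_free n m L A ch hL i j hj measurableSet_Ioo hsubp
    · show ENNReal.ofReal 1 ≤ _
      exact meas_lb_sep n m L A ch hL i t measurableSet_Ioo hsubp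
  have hsumval : ∑ p : MCPlayer n L, Sum.elim (fun _ => (1:ℝ)/3) (fun _ => (1:ℝ)) p
      = (4 / 3) * (∑ i, (L i : ℝ)) - n := by
    rw [Fintype.sum_sum_type]
    have h1 : ∑ _q : (Σ i : Fin n, Fin (L i)), (1:ℝ)/3 = (∑ i, (L i : ℝ)) / 3 := by
      rw [Finset.sum_const, Finset.card_univ, Fintype.card_sigma, nsmul_eq_mul]
      push_cast [Fintype.card_fin]
      ring
    have h2 : ∑ _q : (Σ i : Fin n, Fin (L i - 1)), (1:ℝ) = (∑ i, (L i : ℝ)) - n := by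
      rw [Finset.sum_const, Finset.card_univ, Fintype.card_sigma, nsmul_eq_mul, mul_one]
      rw [Nat.cast_sum]
      have : ∀ i : Fin n, ((Fintype.card (Fin (L i - 1)) : ℕ) : ℝ) = (L i : ℝ) - 1 := by
        intro i
        rw [Fintype.card_fin, Nat.cast_sub (by have := hL i; omega), Nat.cast_one]
      rw [Finset.sum_congr rfl (fun i _ => this i), Finset.sum_sub_distrib,
        Finset.sum_const, Finset.card_univ, Fintype.card_fin, nsmul_eq_mul, mul_one]
    simp only [Sum.elim_inl, Sum.elim_inr]
    rw [h1, h2]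
    ring
  calc ENNReal.ofReal ((4 / 3) * (∑ i, (L i : ℝ)) - n)
      = ∑ p : MCPlayer n L, ENNReal.ofReal (Sum.elim (fun _ => (1:ℝ)/3) (fun _ => (1:ℝ)) p) := by
        rw [← hsumval, ENNReal.ofReal_sum_of_nonneg]
        rintro (⟨i,j⟩|⟨i,t⟩) _ <;> norm_num
    _ ≤ _ := Finset.sum_le_sum (fun p _ => hlb p)

/-- correctness of the MCSP reduction, Theorem 6: the constructed
cake instance admits a connected division of utilitarian welfare at least
`B = (4/3)·Σ_i |A_i| − n` iff one can choose `n` pairwise disjoint segments,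
exactly one from each `A_i`. -/
theorem stmt_3 (n m : ℕ) (hn : 1 ≤ n) (hm : 1 ≤ m)
    (L : Fin n → ℕ) (hL : ∀ i, 3 ≤ L i)
    (A : (i : Fin n) → Fin (L i) → ℕ × ℕ)
    (hseg : ∀ i j, 1 ≤ (A i j).1 ∧ (A i j).1 ≤ (A i j).2 ∧ (A i j).2 ≤ m)
    (hdist : ∀ i, Function.Injective (A i)) :
    (∃ (c : Fin (Fintype.card (MCPlayer n L) + 1) → ℝ)
      (σ : Fin (Fintype.card (MCPlayer n L)) ≃ MCPlayer n L),
      Monotone c ∧ c 0 = 0 ∧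
      c (Fin.last _) = m + 2 * ∑ i, ((L i : ℝ) - 1) ∧
      ENNReal.ofReal ((4 / 3) * (∑ i, (L i : ℝ)) - n) ≤
        ∑ p : MCPlayer n L,
          mcMeas n m L A p (Ioo (c (σ.symm p).castSucc) (c (σ.symm p).succ)))
    ↔ (∃ ch : (i : Fin n) → Fin (L i), ∀ i i', i ≠ i' →
        Disjoint (Finset.Icc (A i (ch i)).1 (A i (ch i)).2)
          (Finset.Icc (A i' (ch i')).1 (A i' (ch i')).2)) := by
  constructor
  · rintro ⟨c, σ, hmono, hc0, hclast, hwel⟩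
    exact forward n m hn hm L hL A hseg c σ hmono hwel
  · rintro ⟨ch, hdisj⟩
    exact backward n m hn hm L hL A hseg ch hdisj
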